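/- Let ε be a non-trivial scale (lim_ω ε_n = 0). Then for all sequences x, y : ℕ → ℂ one has the strong triangle inequality in the limit: lim_ω |x_n + y_n|^{ε_n} ≤ max( lim_ω |x_n|^{ε_n}, lim_ω |y_n|^{ε_n} ). In particular, the norm |z| = lim_ω |z_n|^{ε_n} on the complex Robinson field ℋ^ε(ω) is non-Archimedean. -/

import Mathlib

open Filter Topology

/-- The ω-limit of a sequence in the compact space `[0,∞]`; for an ultrafilter this
equals the `limsup` along the ultrafilter. -/
noncomputable def limw (ω : Ultrafilter ℕ) (a : ℕ → ENNReal) : ENNReal :=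
  Filter.limsup a (ω : Filter ℕ)

/-- `lim_ω |z_n|^{η_n}` viewed in `[0,∞]`. -/
noncomputable def limNorm (ω : Ultrafilter ℕ) (η : ℕ → ℝ) (z : ℕ → ℂ) : ENNReal :=
  limw ω (fun n => ENNReal.ofReal (‖z n‖ ^ η n))

/-- A scale is a sequence with values in `(0,1]`. -/
def IsScale (η : ℕ → ℝ) : Prop := ∀ n, 0 < η n ∧ η n ≤ 1

/-- `lim_ω η_n / η'_n` in `[0,∞]`. -/
noncomputable def scaleRatio (ω : Ultrafilter ℕ) (η η' : ℕ → ℝ) : ENNReal :=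
  limw ω (fun n => ENNReal.ofReal (η n / η' n))

/-- `η ≤ η'` iff `lim_ω η_n/η'_n < ∞`. -/
def ScaleLE (ω : Ultrafilter ℕ) (η η' : ℕ → ℝ) : Prop := scaleRatio ω η η' ≠ ⊤

/-- `η < η'` iff `lim_ω η_n/η'_n = 0`. -/
def ScaleLT (ω : Ultrafilter ℕ) (η η' : ℕ → ℝ) : Prop := scaleRatio ω η η' = 0

/-- A scale is non-trivial if `lim_ω ε_n = 0`. -/
def NontrivialScale (ω : Ultrafilter ℕ) (ε : ℕ → ℝ) : Prop :=
  limw ω (fun n => ENNReal.ofReal (ε n)) = 0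

/-- Two scales are equivalent if `C⁻¹ η_n ≤ η'_n ≤ C η_n` ω-almost surely for some `C > 1`. -/
def ScaleEquiv (ω : Ultrafilter ℕ) (η η' : ℕ → ℝ) : Prop :=
  ∃ C : ℝ, 1 < C ∧ {n | C⁻¹ * η n ≤ η' n ∧ η' n ≤ C * η n} ∈ ω

set_option maxHeartbeats 1000000 in
/-- STATEMENT 8: for a non-trivial scale `ε`, the strong triangle inequality holds in the
limit: `lim_ω |x_n+y_n|^{ε_n} ≤ max(lim_ω |x_n|^{ε_n}, lim_ω |y_n|^{ε_n})`; in particular the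
norm of the complex Robinson field `ℋ^ε(ω)` is non-Archimedean. -/
theorem stmt8 (ω : Ultrafilter ℕ) (hω : ∀ s : Set ℕ, sᶜ.Finite → s ∈ ω)
    (ε : ℕ → ℝ) (hε : IsScale ε) (hεnt : NontrivialScale ω ε) (x y : ℕ → ℂ) :
    limNorm ω ε (fun n => x n + y n) ≤ max (limNorm ω ε x) (limNorm ω ε y) := by
  classical
  set A : ℕ → ENNReal := fun n => ENNReal.ofReal (‖x n‖ ^ ε n) with hA
  set B : ℕ → ENNReal := fun n => ENNReal.ofReal (‖y n‖ ^ ε n) with hB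
  set u : ℕ → ENNReal := fun n => ENNReal.ofReal ((2:ℝ) ^ ε n) with hu
  -- pointwise bound
  have key : ∀ n, ENNReal.ofReal (‖x n + y n‖ ^ ε n) ≤ u n * (A n ⊔ B n) := by
    intro n
    obtain ⟨hε0, hε1⟩ := hε n
    have habs : ‖x n + y n‖ ≤ 2 * max (‖x n‖) (‖y n‖) := by
      calc ‖x n + y n‖ ≤ ‖x n‖ + ‖y n‖ :=
            norm_add_le _ _
        _ ≤ max (‖x n‖) (‖y n‖)
            + max (‖x n‖) (‖y n‖) := by
            gcongr
            exacts [le_max_left _ _, le_max_right _ _]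
        _ = 2 * max (‖x n‖) (‖y n‖) := by ring
    have h1 : ‖x n + y n‖ ^ ε n
        ≤ (2 * max (‖x n‖) (‖y n‖)) ^ ε n :=
      Real.rpow_le_rpow (norm_nonneg _) habs hε0.le
    have h2 : (2 * max (‖x n‖) (‖y n‖)) ^ ε n
        = (2:ℝ) ^ ε n * max (‖x n‖) (‖y n‖) ^ ε n :=
      Real.mul_rpow (by norm_num) (le_max_of_le_left (norm_nonneg _))
    have h3 : ENNReal.ofReal (max (‖x n‖) (‖y n‖) ^ ε n)
        ≤ A n ⊔ B n := by
      rcases le_total (‖x n‖) (‖y n‖) with h | h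
      · rw [max_eq_right h]; exact le_sup_right
      · rw [max_eq_left h]; exact le_sup_left
    calc ENNReal.ofReal (‖x n + y n‖ ^ ε n)
        ≤ ENNReal.ofReal ((2:ℝ) ^ ε n * max (‖x n‖) (‖y n‖) ^ ε n) :=
          ENNReal.ofReal_le_ofReal (h2 ▸ h1)
      _ = u n * ENNReal.ofReal (max (‖x n‖) (‖y n‖) ^ ε n) :=
          ENNReal.ofReal_mul (Real.rpow_nonneg (by norm_num) _)
      _ ≤ u n * (A n ⊔ B n) := by gcongr
  -- limsup of u is ≤ 1
  have hu1 : limw ω u ≤ 1 := by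
    have hstep : ∀ k : ℕ, limw ω u ≤ ENNReal.ofReal ((2:ℝ) ^ (1 / (k + 1) : ℝ)) := by
      intro k
      have hδ : (0:ℝ) < 1 / (k + 1) := by positivity
      have hev : ∀ᶠ n in (ω : Filter ℕ),
          (fun n => ENNReal.ofReal (ε n)) n < ENNReal.ofReal (1 / (k + 1) : ℝ) := by
        refine Filter.eventually_lt_of_limsup_lt ?_ (by isBoundedDefault)
        rw [show Filter.limsup (fun n => ENNReal.ofReal (ε n)) (ω : Filter ℕ)
          = limw ω (fun n => ENNReal.ofReal (ε n)) from rfl, hεnt]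
        exact ENNReal.ofReal_pos.mpr hδ
      refine Filter.limsup_le_of_le (by isBoundedDefault) ?_
      filter_upwards [hev] with n hn
      have hεlt : ε n < 1 / (k + 1) := by
        have := (ENNReal.ofReal_lt_ofReal_iff hδ).mp hn
        linarith [this]
      exact ENNReal.ofReal_le_ofReal
        (Real.rpow_le_rpow_of_exponent_le (by norm_num) hεlt.le)
    have htend : Filter.Tendsto (fun k : ℕ => ENNReal.ofReal ((2:ℝ) ^ (1 / (k + 1) : ℝ)))
        Filter.atTop (𝓝 1) := by
      have h0 : Filter.Tendsto (fun k : ℕ => (1 / (k + 1) : ℝ)) Filter.atTop (𝓝 0) :=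
        tendsto_one_div_add_atTop_nhds_zero_nat
      have h2 : Filter.Tendsto (fun k : ℕ => (2:ℝ) ^ (1 / (k + 1) : ℝ)) Filter.atTop (𝓝 1) := by
        have := (Real.continuousAt_const_rpow (a := 2) (b := 0) (by norm_num)).tendsto.comp h0
        simpa [Function.comp_def, Real.rpow_zero] using this
      have := (ENNReal.continuous_ofReal.tendsto 1).comp h2
      simpa [Function.comp_def] using this
    exact ge_of_tendsto htend (Filter.Eventually.of_forall hstep)
  -- limsup u ≥ 1 (so nonzero)
  have hu_ge : (1 : ENNReal) ≤ limw ω u := by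
    have : ∀ n, (1 : ENNReal) ≤ u n := by
      intro n
      have : (1:ℝ) ≤ (2:ℝ) ^ ε n := Real.one_le_rpow (by norm_num) (hε n).1.le
      simpa [hu] using ENNReal.one_le_ofReal.mpr this
    exact le_limsup_of_frequently_le
      (Filter.Eventually.frequently (Filter.Eventually.of_forall this))
  -- limsup of max
  have hmax : limw ω (fun n => A n ⊔ B n) ≤ limw ω A ⊔ limw ω B := by
    by_cases hs : {n | A n ≤ B n} ∈ ω
    · have heq : (fun n => A n ⊔ B n) =ᶠ[(ω : Filter ℕ)] B := by
        filter_upwards [hs] with n hn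
        exact sup_eq_right.mpr hn
      rw [show limw ω (fun n => A n ⊔ B n) = Filter.limsup (fun n => A n ⊔ B n) ω from rfl,
        Filter.limsup_congr heq]
      exact le_sup_right
    · have hs' : {n | B n ≤ A n} ∈ ω := by
        have := (Ultrafilter.compl_mem_iff_notMem).mpr hs
        filter_upwards [this] with n hn
        exact le_of_not_ge hn
      have heq : (fun n => A n ⊔ B n) =ᶠ[(ω : Filter ℕ)] A := by
        filter_upwards [hs'] with n hn
        exact sup_eq_left.mpr hn
      rw [show limw ω (fun n => A n ⊔ B n) = Filter.limsup (fun n => A n ⊔ B n) ω from rfl,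
        Filter.limsup_congr heq]
      exact le_sup_left
  -- combine
  have hmul : limw ω (fun n => u n * (A n ⊔ B n))
      ≤ limw ω u * limw ω (fun n => A n ⊔ B n) := by
    refine ENNReal.limsup_mul_le' ?_ ?_
    · left
      intro h
      rw [show Filter.limsup u (ω : Filter ℕ) = limw ω u from rfl] at h
      rw [h] at hu_ge
      exact absurd hu_ge (by simp)
    · left
      intro h
      rw [show Filter.limsup u (ω : Filter ℕ) = limw ω u from rfl] at h
      rw [h] at hu1
      exact absurd hu1 (by simp)
  calc limNorm ω ε (fun n => x n + y n)
      ≤ limw ω (fun n => u n * (A n ⊔ B n)) :=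
        Filter.limsup_le_limsup (Filter.Eventually.of_forall key)
    _ ≤ limw ω u * limw ω (fun n => A n ⊔ B n) := hmul
    _ ≤ 1 * (limw ω A ⊔ limw ω B) := by gcongr
    _ = max (limNorm ω ε x) (limNorm ω ε y) := by rw [one_mul]; rfl
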